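/- Let 0 < q < 1 and r ≥ 2 an integer. For every complex z with Re z > 0, the infinite product ∏_{n=1}^{∞} ( (1-q^{z+n})/(1-q^n) )^{(-1)^r C(n+r-2,r-1)} (1-q^n)^{g_r(z,n)} converges absolutely (i.e., the sum of logarithms converges absolutely). -/

import Mathlib

open Finset Filter Topology

/-- Generalized binomial coefficient C(z,k) = z(z-1)⋯(z-k+1)/k!. -/
noncomputable def genBinom (z : ℂ) (k : ℕ) : ℂ :=
  (∏ i ∈ Finset.range k, (z - i)) / (Nat.factorial k)

/-- g_r(z,n) = ∑_{m=1}^{r-1} (-1)^{m-1} C(z, r-m) C(n+m-2, m-1), with g_1 = 0. -/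
noncomputable def qg (r : ℕ) (z : ℂ) (n : ℕ) : ℂ :=
  ∑ m ∈ Finset.Icc 1 (r - 1),
    (-1 : ℂ) ^ (m - 1) * genBinom z (r - m) * (Nat.choose (n + m - 2) (m - 1))

lemma logq_bound {u v : ℂ} {t : ℝ} (hu : ‖u‖ ≤ t) (hv : ‖v‖ ≤ t) (ht : t ≤ 1/8) :
    ‖Complex.log ((1-u)/(1-v))‖ ≤ 6*t := by
  have ht0 : 0 ≤ t := le_trans (norm_nonneg u) hu
  have hv1 : ‖v‖ < 1 := by linarith
  have h1v : (1:ℂ) - v ≠ 0 := by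
    intro h
    have : v = 1 := by linear_combination -h
    simp [this] at hv1
  have key : (1-u)/(1-v) = 1 + (v-u)/(1-v) := by field_simp; ring
  have hden : (1:ℝ)/2 ≤ ‖(1:ℂ) - v‖ := by
    have := norm_sub_norm_le (1:ℂ) v
    simp only [norm_one] at this
    linarith
  have hnum : ‖v - u‖ ≤ 2*t := le_trans (norm_sub_le _ _) (by linarith)
  have hw : ‖(v-u)/(1-v)‖ ≤ 4*t := by
    rw [norm_div]
    calc ‖v-u‖ / ‖(1:ℂ)-v‖ ≤ (2*t) / (1/2) :=
          div_le_div₀ (by linarith) hnum (by norm_num) hden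
      _ = 4*t := by ring
  rw [key]
  calc ‖Complex.log (1 + (v-u)/(1-v))‖ ≤ (3/2) * ‖(v-u)/(1-v)‖ :=
        Complex.norm_log_one_add_half_le_self (by linarith)
    _ ≤ 6*t := by linarith

set_option maxHeartbeats 4000000 in
theorem stmt5 (q : ℝ) (hq : 0 < q) (hq1 : q < 1) (r : ℕ) (hr : 2 ≤ r) (z : ℂ) (hz : 0 < z.re) :
    Summable (fun n : ℕ =>
      ‖(-1 : ℂ) ^ r * (Nat.choose (n + 1 + r - 2) (r - 1)) *
          Complex.log ((1 - (q : ℂ) ^ (z + n + 1)) / (1 - (q : ℂ) ^ (n + 1)))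
        + qg r z (n + 1) * Complex.log (1 - (q : ℂ) ^ (n + 1))‖) := by
  have hq0 : (0:ℝ) < 1 - q := by linarith
  set K : ℝ := ∑ m ∈ Finset.Icc 1 (r-1), ‖genBinom z (r-m)‖ with hKdef
  have hK0 : 0 ≤ K := Finset.sum_nonneg (fun _ _ => norm_nonneg _)
  set M : ℝ := 6 + 3/2*K with hMdef
  have hM0 : 0 < M := by positivity
  have hsum : Summable (fun n : ℕ => (n:ℝ)^r * q^n) :=
    summable_pow_mul_geometric_of_norm_lt_one r
      (by rwa [Real.norm_eq_abs, abs_of_pos hq])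
  apply summable_of_isBigO_nat hsum
  rw [Asymptotics.isBigO_iff]
  refine ⟨(2:ℝ)^r * q * M, ?_⟩
  have hev1 : ∀ᶠ n : ℕ in Filter.atTop, q^(n+1) ≤ 1/8 := by
    have h := (tendsto_pow_atTop_nhds_zero_of_lt_one hq.le hq1).eventually
      (gt_mem_nhds (by norm_num : (0:ℝ) < 1/8))
    filter_upwards [h] with n hn
    have h2 : q^(n+1) ≤ q^n := pow_le_pow_of_le_one hq.le hq1.le (by omega)
    linarith
  filter_upwards [hev1, Filter.eventually_ge_atTop r] with n h8 hrn
  have hqn1 : (0:ℝ) < q^(n+1) := pow_pos hq _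
  have hb : ‖(q:ℂ)^(n+1)‖ = q^(n+1) := by
    rw [norm_pow, Complex.norm_real, Real.norm_eq_abs, abs_of_pos hq]
  have ha : ‖(q:ℂ)^(z+(n:ℂ)+1)‖ ≤ q^(n+1) := by
    rw [Complex.norm_cpow_eq_rpow_re_of_pos hq]
    have hre : (z+(n:ℂ)+1).re = z.re + ((n:ℝ)+1) := by simp; ring
    rw [hre, Real.rpow_add hq]
    have h1 : q ^ (z.re) ≤ 1 := Real.rpow_le_one hq.le hq1.le hz.le
    have h2 : q ^ ((n:ℝ)+1) = q^(n+1) := by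
      rw [show ((n:ℝ)+1) = ((n+1 : ℕ):ℝ) by push_cast; ring, Real.rpow_natCast]
    rw [h2]
    nlinarith [Real.rpow_pos_of_pos hq z.re]
  have hL1 : ‖Complex.log ((1 - (q:ℂ)^(z+(n:ℂ)+1))/(1 - (q:ℂ)^(n+1)))‖ ≤ 6*q^(n+1) :=
    logq_bound ha hb.le h8
  have hL2 : ‖Complex.log (1 - (q:ℂ)^(n+1))‖ ≤ (3/2)*q^(n+1) := by
    have heq : (1:ℂ) - (q:ℂ)^(n+1) = 1 + (-(q:ℂ)^(n+1)) := by ring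
    rw [heq]
    refine le_trans (Complex.norm_log_one_add_half_le_self ?_) ?_
    · rw [norm_neg, hb]; linarith
    · rw [norm_neg, hb]
  have hchoose : ((Nat.choose (n+1+r-2) (r-1) : ℕ) : ℝ) ≤ ((n+r:ℕ):ℝ)^r := by
    have h : Nat.choose (n+1+r-2) (r-1) ≤ (n+r)^r := by
      calc Nat.choose (n+1+r-2) (r-1) ≤ (n+1+r-2)^(r-1) := Nat.choose_le_pow _ _
        _ ≤ (n+r)^(r-1) := Nat.pow_le_pow_left (by omega) _
        _ ≤ (n+r)^r := Nat.pow_le_pow_right (by omega) (by omega)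
    exact_mod_cast h
  have hqg : ‖qg r z (n+1)‖ ≤ K * ((n+r:ℕ):ℝ)^r := by
    rw [qg]
    calc ‖∑ m ∈ Finset.Icc 1 (r-1),
          (-1:ℂ)^(m-1) * genBinom z (r-m) * (Nat.choose (n+1+m-2) (m-1) : ℕ)‖
        ≤ ∑ m ∈ Finset.Icc 1 (r-1),
          ‖(-1:ℂ)^(m-1) * genBinom z (r-m) * (Nat.choose (n+1+m-2) (m-1) : ℕ)‖ :=
          norm_sum_le _ _
      _ ≤ ∑ m ∈ Finset.Icc 1 (r-1), ‖genBinom z (r-m)‖ * ((n+r:ℕ):ℝ)^r := by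
          apply Finset.sum_le_sum
          intro m hm
          obtain ⟨hm1, hm2⟩ := Finset.mem_Icc.mp hm
          rw [norm_mul, norm_mul, norm_pow, norm_neg, norm_one, one_pow, one_mul]
          refine mul_le_mul_of_nonneg_left ?_ (norm_nonneg _)
          have hnn : Nat.choose (n+1+m-2) (m-1) ≤ (n+r)^r := by
            calc Nat.choose (n+1+m-2) (m-1) ≤ (n+1+m-2)^(m-1) := Nat.choose_le_pow _ _
              _ ≤ (n+r)^(m-1) := Nat.pow_le_pow_left (by omega) _
              _ ≤ (n+r)^r := Nat.pow_le_pow_right (by omega) (by omega)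
          rw [Complex.norm_natCast]
          exact_mod_cast hnn
      _ = K * ((n+r:ℕ):ℝ)^r := by rw [← Finset.sum_mul]
  have hfn : ‖(-1 : ℂ) ^ r * (Nat.choose (n + 1 + r - 2) (r - 1)) *
          Complex.log ((1 - (q : ℂ) ^ (z + n + 1)) / (1 - (q : ℂ) ^ (n + 1)))
        + qg r z (n + 1) * Complex.log (1 - (q : ℂ) ^ (n + 1))‖
      ≤ ((n+r:ℕ):ℝ)^r * q^(n+1) * M := by
    calc _ ≤ ‖(-1 : ℂ) ^ r * (Nat.choose (n + 1 + r - 2) (r - 1)) *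
          Complex.log ((1 - (q : ℂ) ^ (z + n + 1)) / (1 - (q : ℂ) ^ (n + 1)))‖
        + ‖qg r z (n + 1) * Complex.log (1 - (q : ℂ) ^ (n + 1))‖ := norm_add_le _ _
      _ ≤ ((n+r:ℕ):ℝ)^r * (6*q^(n+1)) + (K * ((n+r:ℕ):ℝ)^r) * ((3/2)*q^(n+1)) := by
          refine add_le_add ?_ ?_
          · rw [norm_mul, norm_mul, norm_pow, norm_neg, norm_one, one_pow, one_mul,
              Complex.norm_natCast]
            exact mul_le_mul hchoose hL1 (norm_nonneg _) (by positivity)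
          · rw [norm_mul]
            exact mul_le_mul hqg hL2 (norm_nonneg _) (mul_nonneg hK0 (by positivity))
      _ = ((n+r:ℕ):ℝ)^r * q^(n+1) * M := by rw [hMdef]; ring
  have hnr : ((n+r:ℕ):ℝ)^r ≤ 2^r * (n:ℝ)^r := by
    have hc : ((n+r:ℕ):ℝ) ≤ 2*(n:ℝ) := by
      have : (r:ℝ) ≤ (n:ℝ) := Nat.cast_le.mpr hrn
      push_cast
      linarith
    calc ((n+r:ℕ):ℝ)^r ≤ (2*(n:ℝ))^r := pow_le_pow_left₀ (by positivity) hc r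
      _ = 2^r*(n:ℝ)^r := mul_pow _ _ _
  rw [Real.norm_eq_abs, abs_of_nonneg (norm_nonneg _), Real.norm_eq_abs,
    abs_of_nonneg (by positivity : (0:ℝ) ≤ (n:ℝ)^r * q^n)]
  calc _ ≤ ((n+r:ℕ):ℝ)^r * q^(n+1) * M := hfn
    _ ≤ (2^r * (n:ℝ)^r) * q^(n+1) * M := by
        exact mul_le_mul_of_nonneg_right (mul_le_mul_of_nonneg_right hnr hqn1.le) hM0.le
    _ = 2^r * q * M * ((n:ℝ)^r * q^n) := by rw [pow_succ]; ring
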